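/- For a lattice polygon T contained in ℝ≥0² that does not contain the origin (0,0), the quantity τ(T) = 2S − a − b is nonnegative, where S is the area of T, and a, b are the lengths of T ∩ (x-axis) and T ∩ (y-axis) respectively. -/

import Mathlib

open MeasureTheory Set


lemma region_le_volume {T : Set (ℝ × ℝ)} {f g : ℝ → ℝ} {s : Set ℝ}
    (hf : IntegrableOn f s) (hg : IntegrableOn g s) (hs : MeasurableSet s)
    (hfg : ∀ x ∈ s, f x ≤ g x) (hsub : regionBetween f g s ⊆ T) :
    ENNReal.ofReal (∫ y in s, (g - f) y) ≤ volume T := by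
  rw [← volume_regionBetween_eq_integral hf hg hs hfg, Measure.volume_eq_prod]
  exact measure_mono hsub

open intervalIntegral in
lemma lin_int (c d p L : ℝ) (h : p ≤ L) :
    ∫ x in Ioo p L, (c + d * x) = (c * L + d * (L ^ 2 / 2)) - (c * p + d * (p ^ 2 / 2)) := by
  rw [← integral_Ioc_eq_integral_Ioo, ← intervalIntegral.integral_of_le h]
  rw [integral_add intervalIntegrable_const ((intervalIntegrable_id).const_mul d)]
  rw [intervalIntegral.integral_const_mul, integral_id, intervalIntegral.integral_const]
  simp [smul_eq_mul]; ring

lemma cont_int (c d : ℝ) {p L : ℝ} : IntegrableOn (fun x => c + d * x) (Ioo p L) := by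
  exact ((continuous_const.add (continuous_const.mul continuous_id)).integrableOn_Icc).mono_set
    Ioo_subset_Icc_self

lemma tri_vol {T : Set (ℝ × ℝ)} (hconv : Convex ℝ T) {q Q e h : ℝ}
    (hqQ : q ≤ Q) (he : 1 ≤ e)
    (hC : ∀ y, q ≤ y → y ≤ Q → ((0:ℝ), y) ∈ T) (hE : ((e:ℝ), h) ∈ T) :
    ENNReal.ofReal ((Q - q) / 2) ≤ volume T := by
  have he0 : (0:ℝ) < e := lt_of_lt_of_le one_pos he
  have key := region_le_volume (T := T) (f := fun x => q + ((h - q)/e) * x)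
      (g := fun x => Q + ((h - Q)/e) * x) (s := Ioo 0 e)
      (cont_int _ _) (cont_int _ _) measurableSet_Ioo ?_ ?_
  · refine le_trans ?_ key
    apply ENNReal.ofReal_le_ofReal
    have heq : ((fun x => Q + ((h - Q)/e) * x) - (fun x => q + ((h - q)/e) * x))
        = fun x => (Q - q) + (((h - Q)/e) - ((h - q)/e)) * x := by
      funext x; simp [Pi.sub_apply]; ring
    rw [heq, lin_int _ _ _ _ he0.le]
    have hd : ((h - Q)/e) - ((h - q)/e) = -((Q - q)/e) := by ring
    rw [hd]
    have hval : (Q - q) * e + -((Q - q) / e) * (e ^ 2 / 2)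
        - ((Q - q) * 0 + -((Q - q) / e) * (0 ^ 2 / 2)) = (Q - q) * e / 2 := by
      field_simp; ring
    rw [hval]
    nlinarith [mul_nonneg (sub_nonneg.2 hqQ) (sub_nonneg.2 he)]
  · intro x hx
    rw [← sub_nonneg]
    have hrw : Q + (h - Q)/e * x - (q + (h - q)/e * x) = (Q - q) * (e - x) / e := by
      field_simp; ring
    rw [hrw]
    exact div_nonneg (mul_nonneg (by linarith) (by linarith [hx.2])) he0.le
  · rintro ⟨x, y⟩ hz
    obtain ⟨hx, hy⟩ := hz
    simp only [mem_Ioo] at hx hy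
    set s₀ := x / e with hs₀def
    have hs0 : 0 < s₀ := div_pos hx.1 he0
    have hs1 : s₀ < 1 := (div_lt_one he0).2 hx.2
    have h1s : 0 < 1 - s₀ := by linarith
    set v := (y - s₀ * h) / (1 - s₀) with hvdef
    have hfx : q + ((h - q)/e) * x = q + (h - q) * s₀ := by
      rw [hs₀def]; ring
    have hgx : Q + ((h - Q)/e) * x = Q + (h - Q) * s₀ := by
      rw [hs₀def]; ring
    have hvq : q ≤ v := by
      rw [le_div_iff₀ h1s]
      nlinarith [hy.1, hfx]
    have hvQ : v ≤ Q := by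
      rw [div_le_iff₀ h1s]
      nlinarith [hy.2, hgx]
    have hmem := hconv hE (hC v hvq hvQ) hs0.le h1s.le (by ring)
    have hxy : ((x : ℝ), y) = s₀ • ((e:ℝ), h) + (1 - s₀) • ((0:ℝ), v) := by
      have h1 : x = s₀ * e := by rw [hs₀def]; field_simp
      have h2 : y = s₀ * h + (1 - s₀) * v := by
        rw [hvdef]
        field_simp; ring
      simp only [Prod.smul_mk, smul_eq_mul, Prod.mk_add_mk]
      exact Prod.ext (by rw [h1]; ring) (by rw [h2])
    rw [hxy]; exact hmem



lemma quad_mem {T : Set (ℝ × ℝ)} (hconv : Convex ℝ T) {p P q Q x y : ℝ}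
    (hp : 1 ≤ p) (hpP : p ≤ P) (hq : 1 ≤ q) (hqQ : q ≤ Q)
    (hA : ∀ u, p ≤ u → u ≤ P → ((u:ℝ), (0:ℝ)) ∈ T)
    (hC : ∀ v, q ≤ v → v ≤ Q → ((0:ℝ), v) ∈ T)
    (hx0 : 0 < x) (hxP : x < P) (hy0 : 0 < y)
    (h1 : q * (p - x) ≤ p * y) (h2 : P * y ≤ Q * (P - x)) : (x, y) ∈ T := by
  have hp0 : (0:ℝ) < p := lt_of_lt_of_le one_pos hp
  have hP0 : (0:ℝ) < P := lt_of_lt_of_le hp0 hpP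
  have hq0 : (0:ℝ) < q := lt_of_lt_of_le one_pos hq
  have hQ0 : (0:ℝ) < Q := lt_of_lt_of_le hq0 hqQ
  set s := max (x / P) (1 - y / q) with hsdef
  have hsx : x / P ≤ s := le_max_left _ _
  have hsy : 1 - y / q ≤ s := le_max_right _ _
  have hs0 : 0 < s := lt_of_lt_of_le (div_pos hx0 hP0) hsx
  have hs1 : s < 1 := by
    apply max_lt ((div_lt_one hP0).2 hxP)
    have : 0 < y / q := div_pos hy0 hq0
    linarith
  have h1s : 0 < 1 - s := by linarith
  have hsxp : s ≤ x / p := by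
    apply max_le
    · exact div_le_div_of_nonneg_left hx0.le hp0 hpP
    · have h3 : (1 : ℝ) ≤ x / p + y / q := by
        rw [div_add_div _ _ hp0.ne' hq0.ne', le_div_iff₀ (mul_pos hp0 hq0)]
        nlinarith
      linarith
  have hsQ : s ≤ 1 - y / Q := by
    apply max_le
    · have h3 : x / P + y / Q ≤ 1 := by
        rw [div_add_div _ _ hP0.ne' hQ0.ne', div_le_one (mul_pos hP0 hQ0)]
        nlinarith
      linarith
    · have h3 : y / Q ≤ y / q := div_le_div_of_nonneg_left hy0.le hq0 hqQ
      linarith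
  have hu1 : x / s ≤ P := by
    rw [div_le_iff₀ hs0]
    have := (div_le_iff₀ hP0).1 hsx
    linarith [mul_comm P s]
  have hu2 : p ≤ x / s := by
    rw [le_div_iff₀ hs0]
    have h4 := mul_le_mul_of_nonneg_right hsxp hp0.le
    rw [div_mul_cancel₀ x hp0.ne'] at h4
    linarith [mul_comm p s]
  have hv2 : y / (1 - s) ≤ Q := by
    rw [div_le_iff₀ h1s]
    have hyQ : y / Q ≤ 1 - s := by linarith
    have h4 := mul_le_mul_of_nonneg_right hyQ hQ0.le
    rw [div_mul_cancel₀ y hQ0.ne'] at h4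
    linarith [mul_comm Q (1 - s)]
  have hv1 : q ≤ y / (1 - s) := by
    rw [le_div_iff₀ h1s]
    have hyq : 1 - s ≤ y / q := by linarith
    have h4 := mul_le_mul_of_nonneg_right hyq hq0.le
    rw [div_mul_cancel₀ y hq0.ne'] at h4
    linarith [mul_comm q (1 - s)]
  have hmem := hconv (hA _ hu2 hu1) (hC _ hv1 hv2) hs0.le h1s.le (by ring)
  have hxy : ((x : ℝ), y) = s • ((x / s : ℝ), (0:ℝ)) + (1 - s) • ((0:ℝ), y / (1 - s)) := by
    simp only [Prod.smul_mk, smul_eq_mul, Prod.mk_add_mk]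
    refine Prod.ext ?_ ?_
    · show x = s * (x / s) + (1 - s) * 0
      field_simp; ring
    · show y = s * 0 + (1 - s) * (y / (1 - s))
      field_simp; ring
  rw [hxy]; exact hmem

lemma quad_vol {T : Set (ℝ × ℝ)} (hconv : Convex ℝ T) {p P q Q : ℝ}
    (hp : 1 ≤ p) (hpP : p ≤ P) (hq : 1 ≤ q) (hqQ : q ≤ Q)
    (hA : ∀ u, p ≤ u → u ≤ P → ((u:ℝ), (0:ℝ)) ∈ T)
    (hC : ∀ v, q ≤ v → v ≤ Q → ((0:ℝ), v) ∈ T) :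
    ENNReal.ofReal ((Q * P - q * p) / 2) ≤ volume T := by
  have hp0 : (0:ℝ) < p := lt_of_lt_of_le one_pos hp
  have hP0 : (0:ℝ) < P := lt_of_lt_of_le hp0 hpP
  have hq0 : (0:ℝ) < q := lt_of_lt_of_le one_pos hq
  have hQ0 : (0:ℝ) < Q := lt_of_lt_of_le hq0 hqQ
  set f₁ : ℝ → ℝ := fun x => q + (-(q / p)) * x with hf₁
  set f₂ : ℝ → ℝ := fun x => (0:ℝ) + (0:ℝ) * x with hf₂
  set g : ℝ → ℝ := fun x => Q + (-(Q / P)) * x with hg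
  have hfg1 : ∀ x ∈ Ioo (0:ℝ) p, f₁ x ≤ g x := by
    intro x hx
    simp only [hf₁, hg]
    have h1 : q * (1 - x / p) ≤ Q * (1 - x / p) := by
      apply mul_le_mul_of_nonneg_right hqQ
      rw [sub_nonneg, div_le_one hp0]; exact hx.2.le
    have h2 : Q * (1 - x / p) ≤ Q * (1 - x / P) := by
      apply mul_le_mul_of_nonneg_left _ hQ0.le
      have := div_le_div_of_nonneg_left hx.1.le hp0 hpP
      linarith
    have e1 : q + (-(q / p)) * x = q * (1 - x / p) := by field_simp; ring
    have e2 : Q + (-(Q / P)) * x = Q * (1 - x / P) := by field_simp; ring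
    rw [e1, e2]; linarith
  have hfg2 : ∀ x ∈ Ioo p P, f₂ x ≤ g x := by
    intro x hx
    simp only [hf₂, hg]
    have e2 : Q + (-(Q / P)) * x = Q * (1 - x / P) := by field_simp; ring
    rw [e2]
    have : x / P ≤ 1 := by rw [div_le_one hP0]; exact hx.2.le
    nlinarith
  have hR1 : regionBetween f₁ g (Ioo 0 p) ⊆ T := by
    rintro ⟨x, y⟩ ⟨hx, hy⟩
    simp only [mem_Ioo, hf₁, hg] at hx hy
    have hyf : q + (-(q / p)) * x < y := hy.1
    have hyg : y < Q + (-(Q / P)) * x := hy.2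
    have hy0 : 0 < y := by
      have : 0 < q * (1 - x / p) := by
        apply mul_pos hq0; rw [sub_pos, div_lt_one hp0]; exact hx.2
      have e1 : q + (-(q / p)) * x = q * (1 - x / p) := by field_simp; ring
      linarith [e1 ▸ hyf]
    have e1 : p * (q + -(q / p) * x) = q * p - q * x := by field_simp; ring
    have e2 : P * (Q + -(Q / P) * x) = Q * P - Q * x := by field_simp; ring
    have hyf' := e1 ▸ mul_lt_mul_of_pos_left hyf hp0
    have hyg' := e2 ▸ mul_lt_mul_of_pos_left hyg hP0
    exact quad_mem hconv hp hpP hq hqQ hA hC hx.1 (lt_of_lt_of_le hx.2 hpP)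
      hy0 (by nlinarith [hyf']) (by nlinarith [hyg'])
  have hR2 : regionBetween f₂ g (Ioo p P) ⊆ T := by
    rintro ⟨x, y⟩ ⟨hx, hy⟩
    simp only [mem_Ioo, hf₂, hg] at hx hy
    have hy0 : 0 < y := by have := hy.1; linarith
    have e2 : P * (Q + -(Q / P) * x) = Q * P - Q * x := by field_simp; ring
    have hyg' := e2 ▸ mul_lt_mul_of_pos_left hy.2 hP0
    exact quad_mem hconv hp hpP hq hqQ hA hC (lt_trans hp0 hx.1) hx.2 hy0
      (by nlinarith [hx.1]) (by nlinarith [hyg'])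
  have hcm : ∀ c d : ℝ, Measurable (fun x : ℝ => c + d * x) := fun c d =>
    (continuous_const.add (continuous_const.mul continuous_id)).measurable
  have hm1 : MeasurableSet (regionBetween f₁ g (Ioo (0:ℝ) p)) :=
    measurableSet_regionBetween (hcm q (-(q/p))) (hcm Q (-(Q/P))) measurableSet_Ioo
  have hm2 : MeasurableSet (regionBetween f₂ g (Ioo p P)) :=
    measurableSet_regionBetween (hcm 0 0) (hcm Q (-(Q/P))) measurableSet_Ioo
  have hdisj : Disjoint (regionBetween f₁ g (Ioo (0:ℝ) p)) (regionBetween f₂ g (Ioo p P)) := by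
    rw [Set.disjoint_left]
    rintro ⟨x, y⟩ ⟨hx, -⟩ ⟨hx', -⟩
    exact absurd hx'.1 (not_lt.2 hx.2.le)
  have hv1 := volume_regionBetween_eq_integral (cont_int q (-(q/p))) (cont_int Q (-(Q/P)))
    measurableSet_Ioo hfg1
  have hv2 := volume_regionBetween_eq_integral (cont_int 0 0) (cont_int Q (-(Q/P)))
    measurableSet_Ioo hfg2
  have hi1 : ∫ x in Ioo (0:ℝ) p, (g - f₁) x = (Q - q) * p + (-(Q/P) + q/p) * (p^2/2) := by
    have : (g - f₁) = fun x => (Q - q) + (-(Q/P) + q/p) * x := by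
      funext x; simp [hf₁, hg]; ring
    rw [this, lin_int _ _ _ _ hp0.le]; ring
  have hi2 : ∫ x in Ioo p P, (g - f₂) x
      = (Q * P + (-(Q/P)) * (P^2/2)) - (Q * p + (-(Q/P)) * (p^2/2)) := by
    have : (g - f₂) = fun x => Q + (-(Q/P)) * x := by
      funext x; simp [hf₂, hg]
    rw [this, lin_int _ _ _ _ hpP]
  have hi1n : 0 ≤ ∫ x in Ioo (0:ℝ) p, (g - f₁) x :=
    setIntegral_nonneg measurableSet_Ioo (fun x hx => sub_nonneg.2 (hfg1 x hx))
  have hi2n : 0 ≤ ∫ x in Ioo p P, (g - f₂) x :=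
    setIntegral_nonneg measurableSet_Ioo (fun x hx => sub_nonneg.2 (hfg2 x hx))
  calc ENNReal.ofReal ((Q * P - q * p) / 2)
      = ENNReal.ofReal ((∫ x in Ioo (0:ℝ) p, (g - f₁) x) + ∫ x in Ioo p P, (g - f₂) x) := by
        congr 1
        rw [hi1, hi2]
        field_simp
        ring
    _ = ENNReal.ofReal (∫ x in Ioo (0:ℝ) p, (g - f₁) x)
        + ENNReal.ofReal (∫ x in Ioo p P, (g - f₂) x) := ENNReal.ofReal_add hi1n hi2n
    _ = volume.prod volume (regionBetween f₁ g (Ioo 0 p))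
        + volume.prod volume (regionBetween f₂ g (Ioo p P)) := by rw [hv1, hv2]
    _ = volume.prod volume (regionBetween f₁ g (Ioo 0 p) ∪ regionBetween f₂ g (Ioo p P)) :=
        (measure_union hdisj hm2).symm
    _ ≤ volume.prod volume T := measure_mono (union_subset hR1 hR2)
    _ = volume T := (Measure.volume_eq_prod ℝ ℝ ▸ rfl)

/-- `T` is a lattice polygon: the convex hull of a nonempty finite set of points of `ℕ × ℕ`,
with nonempty interior (a genuine two-dimensional polygon). -/
def IsLatticePolygon (T : Set (ℝ × ℝ)) : Prop :=
  (∃ V : Finset (ℕ × ℕ), V.Nonempty ∧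
    T = convexHull ℝ ((fun v : ℕ × ℕ => ((v.1 : ℝ), (v.2 : ℝ))) '' (V : Set (ℕ × ℕ)))) ∧
  (interior T).Nonempty

/-- `τ(T) = 2S - a - b` where `S` is the area of `T` and `a`, `b` are the lengths of the
intersections of `T` with the `x`- and `y`-axis. -/
noncomputable def tau (T : Set (ℝ × ℝ)) : ℝ :=
  2 * (volume T).toReal - (volume {x : ℝ | (x, (0:ℝ)) ∈ T}).toReal
    - (volume {y : ℝ | ((0:ℝ), y) ∈ T}).toReal

/-- For a lattice polygon `T ⊆ ℝ≥0²` not containing the origin, `τ(T) ≥ 0`. -/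
theorem tau_nonneg (T : Set (ℝ × ℝ)) (hT : IsLatticePolygon T)
    (hpos : T ⊆ {z : ℝ × ℝ | 0 ≤ z.1 ∧ 0 ≤ z.2}) (h0 : ((0:ℝ), (0:ℝ)) ∉ T) :
    0 ≤ tau T := by

  obtain ⟨⟨V, hVne, hThull⟩, hint⟩ := hT
  set S₀ : Set (ℝ × ℝ) := (fun v : ℕ × ℕ => ((v.1 : ℝ), (v.2 : ℝ))) '' (V : Set (ℕ × ℕ)) with hS₀
  have hS₀fin : S₀.Finite := (V.finite_toSet).image _
  have hS₀T : S₀ ⊆ T := hThull ▸ subset_convexHull ℝ S₀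
  have hcomp : IsCompact T := hThull ▸ hS₀fin.isCompact_convexHull ℝ
  have hconv : Convex ℝ T := hThull ▸ convex_convexHull ℝ S₀
  have hclosed : IsClosed T := hcomp.isClosed
  have hTfin : volume T ≠ ⊤ := hcomp.measure_lt_top.ne
  -- every point of T satisfies 1 ≤ x + y
  have htot : ∀ z ∈ T, (1:ℝ) ≤ z.1 + z.2 := by
    intro z hz
    have hsub : T ⊆ {z : ℝ × ℝ | 1 ≤ z.1 + z.2} := by
      rw [hThull]
      apply convexHull_min _ (convex_halfSpace_ge
        (⟨fun a b => by simp; ring, fun c a => by simp [smul_eq_mul]; ring⟩ :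
          IsLinearMap ℝ (fun z : ℝ × ℝ => z.1 + z.2)) 1)
      rintro w ⟨v, hv, rfl⟩
      have hvne : v ≠ (0, 0) := by
        rintro rfl
        exact h0 (by simpa using hS₀T ⟨(0,0), hv, rfl⟩)
      have h1 : 1 ≤ v.1 + v.2 := by
        rcases Nat.eq_zero_or_pos (v.1 + v.2) with h | h
        · exact absurd (by ext <;> omega) hvne
        · exact h
      show (1:ℝ) ≤ (v.1 : ℝ) + (v.2 : ℝ)
      exact_mod_cast h1
    exact hsub hz
  -- positive volume
  have hTpos : 0 < volume T := Measure.measure_pos_of_nonempty_interior _ hint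
  -- slices
  set Sx : Set ℝ := {x : ℝ | (x, (0:ℝ)) ∈ T} with hSx
  set Sy : Set ℝ := {y : ℝ | ((0:ℝ), y) ∈ T} with hSy
  obtain ⟨r, hr⟩ := hcomp.isBounded.subset_closedBall 0
  have hSxcl : IsClosed Sx := hclosed.preimage (continuous_id.prodMk continuous_const)
  have hSycl : IsClosed Sy := hclosed.preimage (continuous_const.prodMk continuous_id)
  have hSxbdd : Sx ⊆ Icc (-r) r := by
    intro x hx
    have : ‖((x:ℝ), (0:ℝ))‖ ≤ r := by
      have := hr hx
      rwa [Metric.mem_closedBall, dist_zero_right] at this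
    have h2 : |x| ≤ r := le_trans (norm_fst_le ((x:ℝ), (0:ℝ))) this
    exact abs_le.1 h2
  have hSybdd : Sy ⊆ Icc (-r) r := by
    intro y hy
    have : ‖((0:ℝ), (y:ℝ))‖ ≤ r := by
      have := hr hy
      rwa [Metric.mem_closedBall, dist_zero_right] at this
    have h2 : |y| ≤ r := le_trans (norm_snd_le ((0:ℝ), (y:ℝ))) this
    exact abs_le.1 h2
  have hSxBA : BddAbove Sx := ⟨r, fun x hx => (hSxbdd hx).2⟩
  have hSxBB : BddBelow Sx := ⟨-r, fun x hx => (hSxbdd hx).1⟩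
  have hSyBA : BddAbove Sy := ⟨r, fun y hy => (hSybdd hy).2⟩
  have hSyBB : BddBelow Sy := ⟨-r, fun y hy => (hSybdd hy).1⟩
  have hSx1 : ∀ x ∈ Sx, (1:ℝ) ≤ x := by
    intro x hx; have := htot _ hx; simpa using this
  have hSy1 : ∀ y ∈ Sy, (1:ℝ) ≤ y := by
    intro y hy; have := htot _ hy; simpa using this
  have hSxconv : Convex ℝ Sx := by
    intro x hx y hy a b ha hb hab
    have := hconv hx hy ha hb hab
    simpa [Prod.smul_mk, smul_eq_mul, hSx] using this
  have hSyconv : Convex ℝ Sy := by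
    intro x hx y hy a b ha hb hab
    have := hconv hx hy ha hb hab
    simpa [Prod.smul_mk, smul_eq_mul, hSy] using this
  -- vertices with large coordinates
  have hEx : ∃ v : ℕ × ℕ, v ∈ V ∧ 1 ≤ v.1 := by
    by_contra hcon
    push_neg at hcon
    have hsub : T ⊆ {z : ℝ × ℝ | z.1 = 0} := by
      rw [hThull]
      apply convexHull_min _ (convex_hyperplane
        (⟨fun a b => by simp, fun c a => by simp⟩ : IsLinearMap ℝ (fun z : ℝ × ℝ => z.1)) 0)
      rintro w ⟨v, hv, rfl⟩
      have := hcon v hv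
      show (v.1 : ℝ) = 0
      simp [Nat.lt_one_iff.1 this]
    have hz : volume {z : ℝ × ℝ | z.1 = 0} = 0 := by
      have : {z : ℝ × ℝ | z.1 = 0} = ({(0:ℝ)} : Set ℝ) ×ˢ (univ : Set ℝ) := by
        ext ⟨a, b⟩; simp [Prod.ext_iff, eq_comm]
      rw [this, Measure.volume_eq_prod, Measure.prod_prod]
      simp
    exact absurd (le_antisymm (hz ▸ measure_mono hsub) zero_le) hTpos.ne'
  have hEy : ∃ v : ℕ × ℕ, v ∈ V ∧ 1 ≤ v.2 := by
    by_contra hcon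
    push_neg at hcon
    have hsub : T ⊆ {z : ℝ × ℝ | z.2 = 0} := by
      rw [hThull]
      apply convexHull_min _ (convex_hyperplane
        (⟨fun a b => by simp, fun c a => by simp⟩ : IsLinearMap ℝ (fun z : ℝ × ℝ => z.2)) 0)
      rintro w ⟨v, hv, rfl⟩
      have := hcon v hv
      show (v.2 : ℝ) = 0
      simp [Nat.lt_one_iff.1 this]
    have hz : volume {z : ℝ × ℝ | z.2 = 0} = 0 := by
      have : {z : ℝ × ℝ | z.2 = 0} = (univ : Set ℝ) ×ˢ ({(0:ℝ)} : Set ℝ) := by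
        ext ⟨a, b⟩; simp [Prod.ext_iff, eq_comm]
      rw [this, Measure.volume_eq_prod, Measure.prod_prod]
      simp
    exact absurd (le_antisymm (hz ▸ measure_mono hsub) zero_le) hTpos.ne'
  -- interval characterizations
  have hIcc : ∀ (s : Set ℝ), IsClosed s → Convex ℝ s → BddBelow s → BddAbove s →
      s.Nonempty → s = Icc (sInf s) (sSup s) := by
    intro s hcl hcv hbb hba hne
    apply subset_antisymm
    · exact fun x hx => ⟨csInf_le hbb hx, le_csSup hba hx⟩
    · rw [← segment_eq_Icc (csInf_le_csSup hne hbb hba)]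
      exact hcv.segment_subset (hcl.csInf_mem hne hbb) (hcl.csSup_mem hne hba)
  rcases eq_empty_or_nonempty Sx with hSxe | hSxne <;>
    rcases eq_empty_or_nonempty Sy with hSye | hSyne
  · -- both empty
    unfold tau
    rw [← hSx, ← hSy, hSxe, hSye, measure_empty]
    simp only [ENNReal.toReal_zero, sub_zero]
    positivity
  · -- Sx empty, Sy nonempty
    obtain ⟨v, hv, hv1⟩ := hEx
    have hE : ((v.1 : ℝ), (v.2 : ℝ)) ∈ T := hS₀T ⟨v, hv, rfl⟩
    have hC : ∀ y, sInf Sy ≤ y → y ≤ sSup Sy → ((0:ℝ), y) ∈ T := by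
      intro y h1 h2
      have : y ∈ Sy := (hIcc Sy hSycl hSyconv hSyBB hSyBA hSyne) ▸ mem_Icc.2 ⟨h1, h2⟩
      exact this
    have key := tri_vol hconv (csInf_le_csSup hSyne hSyBB hSyBA)
      (by exact_mod_cast hv1) hC hE
    have hS : (sSup Sy - sInf Sy) / 2 ≤ (volume T).toReal :=
      (ENNReal.ofReal_le_iff_le_toReal hTfin).1 key
    unfold tau
    rw [← hSx, ← hSy, hSxe, measure_empty]
    have hvoly : (volume Sy).toReal = sSup Sy - sInf Sy := by
      conv_lhs => rw [hIcc Sy hSycl hSyconv hSyBB hSyBA hSyne]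
      rw [Real.volume_Icc, ENNReal.toReal_ofReal
        (by linarith [csInf_le_csSup hSyne hSyBB hSyBA])]
    rw [hvoly]
    simp only [ENNReal.toReal_zero, sub_zero]
    linarith
  · -- Sy empty, Sx nonempty: swap coordinates
    obtain ⟨v, hv, hv2⟩ := hEy
    have hE : ((v.1 : ℝ), (v.2 : ℝ)) ∈ T := hS₀T ⟨v, hv, rfl⟩
    set T' : Set (ℝ × ℝ) := Prod.swap ⁻¹' T with hT'
    have hconv' : Convex ℝ T' :=
      hconv.linear_preimage (LinearEquiv.prodComm ℝ ℝ ℝ : (ℝ × ℝ) ≃ₗ[ℝ] (ℝ × ℝ)).toLinearMap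
    have hvol' : volume T' = volume T := by
      rw [hT', Measure.volume_eq_prod]
      exact Measure.measurePreserving_swap.measure_preimage hclosed.measurableSet.nullMeasurableSet
    have hC' : ∀ y, sInf Sx ≤ y → y ≤ sSup Sx → ((0:ℝ), y) ∈ T' := by
      intro y h1 h2
      have : y ∈ Sx := (hIcc Sx hSxcl hSxconv hSxBB hSxBA hSxne) ▸ mem_Icc.2 ⟨h1, h2⟩
      exact this
    have hE' : ((v.2 : ℝ), (v.1 : ℝ)) ∈ T' := hE
    have key := tri_vol hconv' (csInf_le_csSup hSxne hSxBB hSxBA)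
      (by exact_mod_cast hv2) hC' hE'
    rw [hvol'] at key
    have hS : (sSup Sx - sInf Sx) / 2 ≤ (volume T).toReal :=
      (ENNReal.ofReal_le_iff_le_toReal hTfin).1 key
    unfold tau
    rw [← hSx, ← hSy, hSye, measure_empty]
    have hvolx : (volume Sx).toReal = sSup Sx - sInf Sx := by
      conv_lhs => rw [hIcc Sx hSxcl hSxconv hSxBB hSxBA hSxne]
      rw [Real.volume_Icc, ENNReal.toReal_ofReal
        (by linarith [csInf_le_csSup hSxne hSxBB hSxBA])]
    rw [hvolx]
    simp only [ENNReal.toReal_zero, sub_zero]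
    linarith
  · -- both nonempty
    have hpP := csInf_le_csSup hSxne hSxBB hSxBA
    have hqQ := csInf_le_csSup hSyne hSyBB hSyBA
    have hp1 : 1 ≤ sInf Sx := hSx1 _ (hSxcl.csInf_mem hSxne hSxBB)
    have hq1 : 1 ≤ sInf Sy := hSy1 _ (hSycl.csInf_mem hSyne hSyBB)
    have hA : ∀ u, sInf Sx ≤ u → u ≤ sSup Sx → ((u:ℝ), (0:ℝ)) ∈ T := by
      intro u h1 h2
      have : u ∈ Sx := (hIcc Sx hSxcl hSxconv hSxBB hSxBA hSxne) ▸ mem_Icc.2 ⟨h1, h2⟩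
      exact this
    have hC : ∀ y, sInf Sy ≤ y → y ≤ sSup Sy → ((0:ℝ), y) ∈ T := by
      intro y h1 h2
      have : y ∈ Sy := (hIcc Sy hSycl hSyconv hSyBB hSyBA hSyne) ▸ mem_Icc.2 ⟨h1, h2⟩
      exact this
    have key := quad_vol hconv hp1 hpP hq1 hqQ hA hC
    have hS : (sSup Sy * sSup Sx - sInf Sy * sInf Sx) / 2 ≤ (volume T).toReal :=
      (ENNReal.ofReal_le_iff_le_toReal hTfin).1 key
    unfold tau
    rw [← hSx, ← hSy]
    have hvolx : (volume Sx).toReal = sSup Sx - sInf Sx := by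
      conv_lhs => rw [hIcc Sx hSxcl hSxconv hSxBB hSxBA hSxne]
      rw [Real.volume_Icc, ENNReal.toReal_ofReal (by linarith)]
    have hvoly : (volume Sy).toReal = sSup Sy - sInf Sy := by
      conv_lhs => rw [hIcc Sy hSycl hSyconv hSyBB hSyBA hSyne]
      rw [Real.volume_Icc, ENNReal.toReal_ofReal (by linarith)]
    rw [hvolx, hvoly]
    nlinarith [mul_nonneg (sub_nonneg.2 hq1) (sub_nonneg.2 hpP),
      mul_nonneg (sub_nonneg.2 hp1) (sub_nonneg.2 hqQ),
      mul_nonneg (sub_nonneg.2 hpP) (sub_nonneg.2 hqQ)]
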